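/- Let k be a field of characteristic ≠ 2, (P, ⊥) a poset with an order-reversing involution, and ψ an indecomposable linear representation of P in a finite-dimensional k-vector space V. Then the symplectification ψ⁻ is symplectically decomposable — i.e. there exist nonzero subspaces W, W' of V* × V with W' equal to the Ω-orthogonal of W, V* × V = W ⊕ W', and ψ⁻(p) = (ψ⁻(p) ∩ W) ⊕ (ψ⁻(p) ∩ W') for all p ∈ P — if and only if ψ admits a compatible symplectic form, i.e. a nondegenerate alternating bilinear form B on V such that for every p the B-orthogonal of ψ(p) equals ψ(p^⊥). -/

import Mathlib

/-- The canonical symplectic form `Ω((ξ, x), (η, y)) = ξ(y) − η(x)` on `V* × V`. -/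
noncomputable def OmegaForm (k V : Type*) [Field k] [AddCommGroup V] [Module k V] :
    LinearMap.BilinForm k (Module.Dual k V × V) :=
  ((Module.dualPairing k V).compl₁₂
      (LinearMap.fst k (Module.Dual k V) V) (LinearMap.snd k (Module.Dual k V) V)) -
  ((Module.dualPairing k V).compl₁₂
      (LinearMap.fst k (Module.Dual k V) V) (LinearMap.snd k (Module.Dual k V) V)).flip

namespace SymplAux

variable {k V : Type*} [Field k] [AddCommGroup V] [Module k V]

lemma omega_apply (z w : Module.Dual k V × V) :
    OmegaForm k V z w = z.1 w.2 - w.1 z.2 := rfl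

lemma omega_alt (z : Module.Dual k V × V) : OmegaForm k V z z = 0 := by
  rw [omega_apply]; exact sub_self _

lemma omega_skew (z w : Module.Dual k V × V) :
    OmegaForm k V z w = - OmegaForm k V w z := by
  rw [omega_apply, omega_apply]; ring

/-- Auxiliary: image of a submodule under an injective map has the same finrank. -/
lemma finrank_map_eq_of_injective [FiniteDimensional k V] {W : Type*} [AddCommGroup W]
    [Module k W] (f : V →ₗ[k] W) (hf : Function.Injective f) (S : Submodule k V) :
    Module.finrank k (Submodule.map f S) = Module.finrank k S := by
  have h1 := LinearMap.finrank_range_add_finrank_ker (f.domRestrict S)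
  rw [LinearMap.range_domRestrict] at h1
  have h2 : LinearMap.ker (f.domRestrict S) = ⊥ := by
    rw [LinearMap.ker_eq_bot']
    intro m hm
    have : f m = 0 := hm
    have : (m : V) = 0 := hf (by simpa using this)
    exact Subtype.ext this
  rw [h2, finrank_bot, add_zero] at h1
  exact h1

/-- The Fitting-lemma dichotomy for endomorphisms of an indecomposable representation. -/
lemma dichotomy {P : Type*} [FiniteDimensional k V] (ψ : P → Submodule k V)
    (hindec : ∀ U' U'' : Submodule k V, IsCompl U' U'' →
      (∀ p, ψ p = (ψ p ⊓ U') ⊔ (ψ p ⊓ U'')) → U' = ⊥ ∨ U'' = ⊥)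
    (a : V →ₗ[k] V) (ha : ∀ p x, x ∈ ψ p → a x ∈ ψ p) :
    Function.Bijective a ∨ IsNilpotent a := by
  obtain ⟨N, hN⟩ := Filter.eventually_atTop.mp a.eventually_isCompl_ker_pow_range_pow
  set m := N + 1 with hm
  have hc : IsCompl (LinearMap.ker (a ^ m)) (LinearMap.range (a ^ m)) :=
    hN m (Nat.le_add_right _ _)
  have hpow : ∀ (n : ℕ) p x, x ∈ ψ p → (a ^ n) x ∈ ψ p := by
    intro n
    induction n with
    | zero => intro p x hx; simpa using hx
    | succ n ih =>
      intro p x hx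
      rw [pow_succ, Module.End.mul_apply]
      exact ih p (a x) (ha p x hx)
  have hdecomp : ∀ p, ψ p = (ψ p ⊓ LinearMap.ker (a ^ m)) ⊔ (ψ p ⊓ LinearMap.range (a ^ m)) := by
    intro p
    refine le_antisymm ?_ (sup_le inf_le_left inf_le_left)
    intro x hx
    set S := ψ p ⊓ LinearMap.range (a ^ m) with hS
    have hmapS : Submodule.map (a ^ m) S = S := by
      have hle : Submodule.map (a ^ m) S ≤ S := by
        intro y hy
        obtain ⟨z, hz, rfl⟩ := hy
        exact ⟨hpow m p z hz.1, LinearMap.mem_range.mpr ⟨z, rfl⟩⟩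
      refine Submodule.eq_of_le_of_finrank_le hle ?_
      have hdisj : ∀ y : V, y ∈ S → (a ^ m) y = 0 → y = 0 := by
        intro y hy hy0
        have : y ∈ LinearMap.ker (a ^ m) ⊓ LinearMap.range (a ^ m) :=
          ⟨LinearMap.mem_ker.mpr hy0, hy.2⟩
        rwa [hc.inf_eq_bot, Submodule.mem_bot] at this
      have h1 := LinearMap.finrank_range_add_finrank_ker ((a ^ m).domRestrict S)
      rw [LinearMap.range_domRestrict] at h1
      have h2 : LinearMap.ker ((a ^ m).domRestrict S) = ⊥ := by
        rw [LinearMap.ker_eq_bot']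
        intro y hy
        exact Subtype.ext (hdisj y y.2 hy)
      rw [h2, finrank_bot, add_zero] at h1
      exact h1.ge
    have hx1 : (a ^ m) x ∈ S := ⟨hpow m p x hx, LinearMap.mem_range.mpr ⟨x, rfl⟩⟩
    rw [← hmapS] at hx1
    obtain ⟨w, hw, hw2⟩ := hx1
    have hxw : x - w ∈ ψ p ⊓ LinearMap.ker (a ^ m) := by
      refine ⟨Submodule.sub_mem _ hx hw.1, LinearMap.mem_ker.mpr ?_⟩
      rw [map_sub, hw2, sub_self]
    have hxeq : x = (x - w) + w := by abel
    rw [hxeq]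
    exact Submodule.add_mem_sup hxw hw
  rcases hindec _ _ hc hdecomp with h | h
  · left
    have hinj : Function.Injective a := by
      rw [← LinearMap.ker_eq_bot, eq_bot_iff]
      intro x hx
      have hx' : a x = 0 := hx
      have : (a ^ m) x = 0 := by
        rw [hm, pow_succ, Module.End.mul_apply, hx', map_zero]
      rw [← h]
      exact this
    exact ⟨hinj, LinearMap.injective_iff_surjective.mp hinj⟩
  · right
    exact ⟨m, LinearMap.range_eq_bot.mp h⟩

variable (k) in
/-- The "lower-right block" of an endomorphism of `V* × V`. -/
def aOf (e : (Module.Dual k V × V) →ₗ[k] (Module.Dual k V × V)) : V →ₗ[k] V :=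
  (LinearMap.snd k (Module.Dual k V) V) ∘ₗ e ∘ₗ (LinearMap.inr k (Module.Dual k V) V)

variable (k) in
/-- The "lower-left block" of an endomorphism of `V* × V`, as a bilinear form on `V`. -/
def cOf (e : (Module.Dual k V × V) →ₗ[k] (Module.Dual k V × V)) : LinearMap.BilinForm k V :=
  (LinearMap.fst k (Module.Dual k V) V) ∘ₗ e ∘ₗ (LinearMap.inr k (Module.Dual k V) V)

lemma aOf_apply (e : (Module.Dual k V × V) →ₗ[k] (Module.Dual k V × V)) (v : V) :
    aOf k e v = (e (0, v)).2 := rfl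

lemma cOf_apply (e : (Module.Dual k V × V) →ₗ[k] (Module.Dual k V × V)) (v : V) :
    cOf k e v = (e (0, v)).1 := rfl

lemma e_zero_apply (e : (Module.Dual k V × V) →ₗ[k] (Module.Dual k V × V)) (v : V) :
    e (0, v) = (cOf k e v, aOf k e v) := rfl

lemma aOf_id_sub (e : (Module.Dual k V × V) →ₗ[k] (Module.Dual k V × V)) :
    aOf k (LinearMap.id - e) = LinearMap.id - aOf k e := by
  ext v; rfl

/-- skew-symmetry of the `c` block of a self-adjoint endomorphism. -/
lemma cOf_skew (e : (Module.Dual k V × V) →ₗ[k] (Module.Dual k V × V))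
    (hsa : ∀ z w, OmegaForm k V (e z) w = OmegaForm k V z (e w)) (x y : V) :
    cOf k e x y = - cOf k e y x := by
  have h := hsa (0, x) (0, y)
  rw [omega_apply, omega_apply] at h
  simpa [e_zero_apply] using h

lemma omega_ee (e : (Module.Dual k V × V) →ₗ[k] (Module.Dual k V × V))
    (hee : ∀ z, e (e z) = e z)
    (hsa : ∀ z w, OmegaForm k V (e z) w = OmegaForm k V z (e w))
    (z w : Module.Dual k V × V) :
    OmegaForm k V (e z) (e w) = OmegaForm k V (e z) w := by
  rw [hsa z (e w), hee, ← hsa z w]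

/-- In the degenerate case (lower-right block invertible, its complement nilpotent) the
projection is the identity. -/
lemma proj_eq_id [FiniteDimensional k V]
    (e : (Module.Dual k V × V) →ₗ[k] (Module.Dual k V × V))
    (hee : ∀ z, e (e z) = e z)
    (hsa : ∀ z w, OmegaForm k V (e z) w = OmegaForm k V z (e w))
    (ha : Function.Bijective (aOf k e))
    (hN : IsNilpotent (LinearMap.id - aOf k e)) :
    ∀ z, e z = z := by
  have hskew := cOf_skew e hsa
  -- the key relation  c x y = c x (a y) + c (a x) y
  have hR2 : ∀ x y, cOf k e x y = cOf k e x (aOf k e y) + cOf k e (aOf k e x) y := by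
    intro x y
    have key : OmegaForm k V ((0, x) - e (0, x)) (e (0, y)) = 0 := by
      have h1 : OmegaForm k V (e (0, x)) (e (0, y)) = OmegaForm k V ((0, x)) (e (0, y)) := by
        rw [hsa (0, x) (e (0, y)), hee, ← hsa (0, x) (0, y)]
      rw [map_sub, LinearMap.sub_apply, h1, sub_self]
    rw [omega_apply] at key
    simp only [e_zero_apply, Prod.fst_sub, Prod.snd_sub, LinearMap.sub_apply, map_sub,
      LinearMap.zero_apply, zero_sub, LinearMap.neg_apply] at key
    have h2 := hskew y x
    have h3 := hskew y (aOf k e x)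
    linear_combination key + h2 - h3
  have hR2' : ∀ x u, cOf k e ((LinearMap.id - aOf k e : V →ₗ[k] V) x) u
      = cOf k e x (aOf k e u) := by
    intro x u
    have h0 : cOf k e ((LinearMap.id - aOf k e : V →ₗ[k] V) x) u
        = cOf k e x u - cOf k e (aOf k e x) u := by
      simp [LinearMap.sub_apply, map_sub]
    rw [h0, hR2 x u]; ring
  have hRm : ∀ (m : ℕ) (x y : V),
      cOf k e (((LinearMap.id - aOf k e : V →ₗ[k] V) ^ m) x) y
      = cOf k e x (((aOf k e : V →ₗ[k] V) ^ m) y) := by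
    intro m
    induction m with
    | zero => intro x y; simp
    | succ n ih =>
      intro x y
      have h1 : (((LinearMap.id - aOf k e : V →ₗ[k] V)) ^ (n + 1)) x
          = (((LinearMap.id - aOf k e : V →ₗ[k] V)) ^ n)
            ((LinearMap.id - aOf k e : V →ₗ[k] V) x) := by
        rw [pow_succ, Module.End.mul_apply]
      rw [h1, ih, hR2']
      congr 1
      rw [pow_succ', Module.End.mul_apply]
  obtain ⟨m, hm⟩ := hN
  have hasurj : ∀ n : ℕ, Function.Surjective ((aOf k e : V →ₗ[k] V) ^ n) := by
    intro n
    induction n with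
    | zero => intro x; exact ⟨x, by simp⟩
    | succ n ih =>
      intro x
      obtain ⟨y, hy⟩ := ih x
      obtain ⟨w, hw⟩ := ha.surjective y
      exact ⟨w, by rw [pow_succ, Module.End.mul_apply, hw, hy]⟩
  have hc0 : ∀ x y, cOf k e x y = 0 := by
    intro x y
    obtain ⟨y', rfl⟩ := hasurj m y
    have := hRm m x y'
    rw [hm] at this
    simpa using this.symm
  have hcz : ∀ v, cOf k e v = 0 := fun v => LinearMap.ext fun y => hc0 v y
  have he0 : ∀ v, e (0, v) = (0, aOf k e v) := by
    intro v
    rw [e_zero_apply, hcz]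
  have haa : ∀ v, aOf k e (aOf k e v) = aOf k e v := by
    intro v
    have h1 : e (0, aOf k e v) = (0, aOf k e v) := by
      rw [← he0 v, hee, he0]
    have := congrArg Prod.snd h1
    simpa [e_zero_apply] using this
  have ha1 : ∀ v, aOf k e v = v := by
    intro v
    obtain ⟨w, rfl⟩ := ha.surjective v
    exact haa w
  have he0v : ∀ v, e (0, v) = (0, v) := by
    intro v; rw [he0, ha1]
  have he10 : ∀ ξ : Module.Dual k V, e (ξ, 0) = (ξ, 0) := by
    intro ξ
    have hfst : (e (ξ, 0)).1 = ξ := by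
      apply LinearMap.ext
      intro y
      have h := hsa (ξ, 0) (0, y)
      rw [he0v] at h
      rw [omega_apply, omega_apply] at h
      simpa using h
    obtain ⟨u, hu⟩ : ∃ u, e (ξ, 0) = (ξ, u) := ⟨(e (ξ, 0)).2, Prod.ext hfst rfl⟩
    have h2 := hee (ξ, 0)
    rw [hu] at h2
    have hsplit : ((ξ, u) : Module.Dual k V × V) = (ξ, 0) + (0, u) := by simp
    have h3 : e (ξ, u) = (ξ, u + u) := by
      rw [hsplit, map_add, hu, he0v, Prod.mk_add_mk, add_zero]
    rw [h3] at h2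
    have h4 := congrArg Prod.snd h2
    have h5 : u = 0 := add_eq_left.mp h4
    rw [hu, h5]
  intro z
  have hz : z = ((z.1, 0) : Module.Dual k V × V) + (0, z.2) := by simp
  rw [hz, map_add, he10, he0v]

/-- Main construction: when both diagonal-block maps are bijective, the `c` block gives a
compatible symplectic form. -/
lemma construction [FiniteDimensional k V] {P : Type*} (h2 : (2 : k) ≠ 0)
    (invol : P → P) (ψ : P → Submodule k V)
    (e : (Module.Dual k V × V) →ₗ[k] (Module.Dual k V × V))
    (hee : ∀ z, e (e z) = e z)
    (hsa : ∀ z w, OmegaForm k V (e z) w = OmegaForm k V z (e w))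
    (hpres : ∀ p z, z ∈ (ψ (invol p)).dualAnnihilator.prod (ψ p) →
        e z ∈ (ψ (invol p)).dualAnnihilator.prod (ψ p))
    (ha : Function.Bijective (aOf k e))
    (ha' : Function.Bijective (LinearMap.id - aOf k e : V →ₗ[k] V)) :
    ∃ B : LinearMap.BilinForm k V, B.Nondegenerate ∧ LinearMap.IsAlt B ∧
      ∀ p, ∀ v : V, v ∈ ψ (invol p) ↔ ∀ w ∈ ψ p, B v w = 0 := by
  have hskew := cOf_skew e hsa
  -- a preserves each ψ q
  have hamem : ∀ q v, v ∈ ψ q → aOf k e v ∈ ψ q := by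
    intro q v hv
    have h0 : ((0 : Module.Dual k V), v) ∈ (ψ (invol q)).dualAnnihilator.prod (ψ q) :=
      Submodule.mem_prod.mpr ⟨Submodule.zero_mem _, hv⟩
    have := hpres q _ h0
    exact (Submodule.mem_prod.mp this).2
  have hamap : ∀ q, Submodule.map (aOf k e) (ψ q) = ψ q := by
    intro q
    refine Submodule.eq_of_le_of_finrank_le ?_ ?_
    · intro y hy; obtain ⟨x, hx, rfl⟩ := hy; exact hamem q x hx
    · rw [finrank_map_eq_of_injective (aOf k e) ha.injective]
  -- a fixed point of e with zero second component is zero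
  have fixzero : ∀ z : Module.Dual k V × V, e z = z → z.2 = 0 → z = 0 := by
    intro z hez hz2
    have hξ : ∀ y, z.1 y = z.1 (aOf k e y) := by
      intro y
      have h := hsa z (0, y)
      rw [hez] at h
      rw [omega_apply, omega_apply, e_zero_apply] at h
      simpa [hz2] using h
    have hz1 : z.1 = 0 := by
      apply LinearMap.ext
      intro u
      obtain ⟨y, hy⟩ := ha'.surjective u
      have : z.1 ((LinearMap.id - aOf k e : V →ₗ[k] V) y) = 0 := by
        simp only [LinearMap.sub_apply, LinearMap.id_apply, map_sub]
        rw [← hξ y, sub_self]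
      rw [hy] at this
      simpa using this
    calc z = (z.1, z.2) := rfl
    _ = 0 := by rw [hz1, hz2]; rfl
  -- any fixed point of e is of the form e (0, x) where a x is its second component
  have fixform : ∀ z : Module.Dual k V × V, e z = z → ∀ x, aOf k e x = z.2 → e (0, x) = z := by
    intro z hez x hx
    have h1 : e (e (0, x) - z) = e (0, x) - z := by
      rw [map_sub, hee, hez]
    have h2 : (e (0, x) - z).2 = 0 := by
      rw [Prod.snd_sub, e_zero_apply]
      simpa [hx]
    have := fixzero _ h1 h2
    exact sub_eq_zero.mp this
  refine ⟨cOf k e, ?_, ?_, ?_⟩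
  · -- Nondegenerate
    refine LinearMap.BilinForm.Nondegenerate.ofSeparatingLeft ?_
    intro v hv
    have hc1 : cOf k e v = 0 := LinearMap.ext hv
    have he : e (0, v) = (0, aOf k e v) := by rw [e_zero_apply, hc1]
    have he2 : e (0, aOf k e v) = (0, aOf k e v) := by
      rw [← he, hee, he]
    have haa : aOf k e (aOf k e v) = aOf k e v := by
      have := congrArg Prod.snd he2
      simpa [e_zero_apply] using this
    have hav : aOf k e v = 0 := by
      apply ha'.injective
      simp only [LinearMap.sub_apply, LinearMap.id_apply, map_zero]
      rw [haa, sub_self]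
    exact ha.injective (by rw [hav, map_zero])
  · -- Alternating
    intro x
    have h := hskew x x
    have h3 : (2 : k) * cOf k e x x = 0 := by linear_combination h
    exact (mul_eq_zero.mp h3).resolve_left h2
  · -- Compatibility
    intro p v
    constructor
    · intro hv w hw
      have h1 : cOf k e v w = OmegaForm k V (0, v) (e (0, w)) := by
        rw [← hsa (0, v) (0, w), omega_apply, e_zero_apply]
        simp
      have h2 := hpres p (0, w) (Submodule.mem_prod.mpr ⟨Submodule.zero_mem _, hw⟩)
      have h3 : (e (0, w)).1 v = 0 :=
        (Submodule.mem_dualAnnihilator _).mp (Submodule.mem_prod.mp h2).1 v hv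
      rw [h1, omega_apply]
      simpa using h3
    · intro hv
      have claim1 : ∀ y ∈ (ψ (invol p)).dualAnnihilator.prod (ψ p),
          OmegaForm k V (e (0, v)) y = 0 := by
        intro y hy
        have hy1 := hpres p y hy
        have hey : e (e y) = e y := hee y
        obtain ⟨x, hx, hax⟩ : ∃ x ∈ ψ p, aOf k e x = (e y).2 := by
          have h2 : (e y).2 ∈ ψ p := (Submodule.mem_prod.mp hy1).2
          rw [← hamap p] at h2
          obtain ⟨x, hx, hx2⟩ := h2
          exact ⟨x, hx, hx2⟩
        have hform := fixform (e y) hey x hax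
        have hEE := omega_ee e hee hsa
        calc OmegaForm k V (e (0, v)) y
            = OmegaForm k V (e (0, v)) (e y) := (hEE (0, v) y).symm
          _ = OmegaForm k V (e (0, v)) (e (0, x)) := by rw [hform]
          _ = OmegaForm k V (e (0, v)) (0, x) := hEE (0, v) (0, x)
          _ = cOf k e v x := by rw [omega_apply, e_zero_apply]; simp
          _ = 0 := hv x hx
      have hu : aOf k e v ∈ ψ (invol p) := by
        rw [← Subspace.forall_mem_dualAnnihilator_apply_eq_zero_iff (ψ (invol p)) (aOf k e v)]
        intro ξ hξ
        have := claim1 (ξ, 0) (Submodule.mem_prod.mpr ⟨hξ, Submodule.zero_mem _⟩)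
        rw [omega_apply, e_zero_apply] at this
        simpa [sub_eq_zero] using this.symm
      rw [← hamap (invol p)] at hu
      obtain ⟨v', hv', hvv⟩ := hu
      rwa [← ha.injective hvv]

lemma half_add (h2 : (2 : k) ≠ 0) {M : Type*} [AddCommGroup M] [Module k M] (s u : M) :
    (2:k)⁻¹ • (s + u) + (2:k)⁻¹ • (s - u) = s := by
  rw [← smul_add, show s + u + (s - u) = s + s from by abel, ← two_smul k s, smul_smul,
    inv_mul_cancel₀ h2, one_smul]

lemma half_sub (h2 : (2 : k) ≠ 0) {M : Type*} [AddCommGroup M] [Module k M] (s u : M) :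
    (2:k)⁻¹ • (s + u) - (2:k)⁻¹ • (s - u) = u := by
  rw [← smul_sub, show s + u - (s - u) = u + u from by abel, ← two_smul k u, smul_smul,
    inv_mul_cancel₀ h2, one_smul]

/-- The easy direction: a compatible symplectic form yields a symplectic decomposition. -/
lemma reverse [FiniteDimensional k V] [Nontrivial V] {P : Type*} (h2 : (2 : k) ≠ 0)
    (invol : P → P) (ψ : P → Submodule k V)
    (B : LinearMap.BilinForm k V) (hBnd : B.Nondegenerate) (hBalt : LinearMap.IsAlt B)
    (hBcompat : ∀ p, ∀ v : V, v ∈ ψ (invol p) ↔ ∀ w ∈ ψ p, B v w = 0) :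
    ∃ W W' : Submodule k (Module.Dual k V × V), W ≠ ⊥ ∧ W' ≠ ⊥ ∧
      W' = LinearMap.BilinForm.orthogonal (OmegaForm k V).flip W ∧ IsCompl W W' ∧
      ∀ p, ((ψ (invol p)).dualAnnihilator.prod (ψ p)) =
        (((ψ (invol p)).dualAnnihilator.prod (ψ p)) ⊓ W) ⊔
        (((ψ (invol p)).dualAnnihilator.prod (ψ p)) ⊓ W') := by
  set Bd : V →ₗ[k] Module.Dual k V := B with hBd
  have hBinj : Function.Injective Bd := by
    intro x y hxy
    have h0 : Bd (x - y) = 0 := by rw [map_sub, hxy, sub_self]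
    have := hBnd.1 (x - y) (fun n => by rw [show B (x - y) = 0 from h0]; rfl)
    exact sub_eq_zero.mp this
  have hBsurj : Function.Surjective Bd :=
    (LinearMap.injective_iff_surjective_of_finrank_eq_finrank
      Subspace.dual_finrank_eq.symm).mp hBinj
  set f : V →ₗ[k] Module.Dual k V × V := LinearMap.prod Bd LinearMap.id with hf
  set f' : V →ₗ[k] Module.Dual k V × V := LinearMap.prod (-Bd) LinearMap.id with hf'
  have hfapp : ∀ v, f v = (Bd v, v) := fun v => rfl
  have hf'app : ∀ v, f' v = (-Bd v, v) := fun v => rfl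
  refine ⟨LinearMap.range f, LinearMap.range f', ?_, ?_, ?_, ⟨?_, ?_⟩, ?_⟩
  · -- W ≠ ⊥
    obtain ⟨v, hv⟩ := exists_ne (0 : V)
    intro hbot
    have : f v ∈ (⊥ : Submodule k (Module.Dual k V × V)) := hbot ▸ LinearMap.mem_range_self f v
    rw [Submodule.mem_bot] at this
    exact hv (by simpa [hfapp] using congrArg Prod.snd this)
  · obtain ⟨v, hv⟩ := exists_ne (0 : V)
    intro hbot
    have : f' v ∈ (⊥ : Submodule k (Module.Dual k V × V)) := hbot ▸ LinearMap.mem_range_self f' v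
    rw [Submodule.mem_bot] at this
    exact hv (by simpa [hf'app] using congrArg Prod.snd this)
  · -- W' is the Ω-orthogonal of W
    ext z
    rw [LinearMap.BilinForm.mem_orthogonal_iff]
    constructor
    · rintro ⟨w, rfl⟩ n ⟨v, rfl⟩
      show (OmegaForm k V) (f' w) (f v) = 0
      rw [omega_apply, hfapp, hf'app]
      simp only [LinearMap.neg_apply]
      have h1 : -B w v = B v w := hBalt.neg w v
      linear_combination h1
    · intro hz
      have hz' : ∀ v : V, z.1 v = - Bd z.2 v := by
        intro v
        have h0 := hz (f v) (LinearMap.mem_range_self f v)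
        have this2 : OmegaForm k V z (f v) = 0 := h0
        rw [omega_apply, hfapp] at this2
        have h1 : -B z.2 v = B v z.2 := hBalt.neg z.2 v
        linear_combination this2 - h1
      refine ⟨z.2, ?_⟩
      rw [hf'app]
      refine Prod.ext ?_ rfl
      apply LinearMap.ext
      intro v
      simp only [LinearMap.neg_apply]
      exact (hz' v).symm
  · -- disjoint
    rw [disjoint_iff]
    rw [Submodule.eq_bot_iff]
    rintro z ⟨⟨v, rfl⟩, ⟨w, hw⟩⟩
    have h2 : w = v := congrArg Prod.snd hw
    subst h2
    have h1 : -Bd w = Bd w := congrArg Prod.fst hw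
    have h3 : ∀ n, B w n = 0 := by
      intro n
      have := congrArg (fun φ => φ n) h1
      simp only [LinearMap.neg_apply] at this
      have h4 : (2 : k) * B w n = 0 := by linear_combination -this
      exact (mul_eq_zero.mp h4).resolve_left h2
    have : w = 0 := hBnd.1 w h3
    rw [hfapp, this, map_zero]; rfl
  · -- codisjoint
    rw [codisjoint_iff, eq_top_iff]
    rintro z -
    obtain ⟨t, ht⟩ := hBsurj z.1
    have hmem : ((2:k)⁻¹ • (z.2 + t)) ∈ (⊤ : Submodule k V) := trivial
    refine Submodule.mem_sup.mpr ⟨f ((2:k)⁻¹ • (z.2 + t)), LinearMap.mem_range_self _ _,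
      f' ((2:k)⁻¹ • (z.2 - t)), LinearMap.mem_range_self _ _, ?_⟩
    rw [hfapp, hf'app, Prod.mk_add_mk]
    refine Prod.ext ?_ ?_
    · show Bd ((2:k)⁻¹ • (z.2 + t)) + -Bd ((2:k)⁻¹ • (z.2 - t)) = z.1
      rw [map_smul, map_smul, map_add, map_sub, ← sub_eq_add_neg,
        half_sub h2 (Bd z.2) (Bd t), ht]
    · show (2:k)⁻¹ • (z.2 + t) + (2:k)⁻¹ • (z.2 - t) = z.2
      exact half_add h2 z.2 t
  · -- compatibility of the decomposition
    intro p
    refine le_antisymm ?_ (sup_le inf_le_left inf_le_left)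
    -- first: map Bd (ψ p) = dualAnnihilator (ψ (invol p))
    have hBmap : Submodule.map Bd (ψ p) = (ψ (invol p)).dualAnnihilator := by
      have hle : Submodule.map Bd (ψ p) ≤ (ψ (invol p)).dualAnnihilator := by
        rintro - ⟨v, hv, rfl⟩
        rw [Submodule.mem_dualAnnihilator]
        intro w hw
        have h1 : B w v = 0 := (hBcompat p w).mp hw v hv
        have hneg : -B w v = B v w := hBalt.neg w v
        show B v w = 0
        linear_combination -hneg - h1
      refine (Submodule.eq_of_le_of_finrank_le hle ?_)
      -- finrank computation
      have e1 : Module.finrank k (Submodule.map Bd (ψ p)) = Module.finrank k (ψ p) :=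
        finrank_map_eq_of_injective Bd hBinj (ψ p)
      have e2 : Module.finrank k (ψ (invol p))
          + Module.finrank k ((ψ (invol p)).dualAnnihilator) = Module.finrank k V := by
        have ea := Submodule.finrank_quotient_add_finrank (ψ (invol p))
        have eb := LinearEquiv.finrank_eq (R := k) (M := V ⧸ ψ (invol p))
          (N := ((ψ (invol p)).dualAnnihilator : Submodule k (Module.Dual k V)))
          (Subspace.quotEquivAnnihilator (ψ (invol p)))
        omega
      have e3 : ψ (invol p) = B.orthogonal (ψ p) := by
        ext v
        rw [LinearMap.BilinForm.mem_orthogonal_iff, hBcompat p v]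
        constructor
        · intro h n hn
          exact hBalt.isRefl v n (h n hn)
        · intro h w hw
          exact hBalt.isRefl w v (h w hw)
      have e4 : Module.finrank k (ψ (invol p))
          = Module.finrank k V - Module.finrank k (ψ p) := by
        rw [e3]
        exact LinearMap.BilinForm.finrank_orthogonal hBnd (ψ p)
      have e5 : Module.finrank k (ψ p) ≤ Module.finrank k V := Submodule.finrank_le _
      omega
    rintro ⟨ξ, x⟩ hz
    rw [Submodule.mem_prod] at hz
    obtain ⟨hz1, hz2⟩ := hz
    obtain ⟨t, ht, htB⟩ : ∃ t ∈ ψ p, Bd t = ξ := by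
      rw [← hBmap] at hz1
      obtain ⟨t, ht, ht2⟩ := hz1
      exact ⟨t, ht, ht2⟩
    set v := (2:k)⁻¹ • (x + t) with hv
    set w := (2:k)⁻¹ • (x - t) with hw
    have hvmem : v ∈ ψ p := Submodule.smul_mem _ _ (Submodule.add_mem _ hz2 ht)
    have hwmem : w ∈ ψ p := Submodule.smul_mem _ _ (Submodule.sub_mem _ hz2 ht)
    have hsum : ((ξ, x) : Module.Dual k V × V) = f v + f' w := by
      rw [hfapp, hf'app, Prod.mk_add_mk]
      refine Prod.ext ?_ ?_
      · refine Eq.symm ?_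
        show Bd v + -Bd w = ξ
        rw [hv, hw, map_smul, map_smul, map_add, map_sub, ← sub_eq_add_neg,
          half_sub h2 (Bd x) (Bd t), htB]
      · refine Eq.symm ?_
        show v + w = x
        rw [hv, hw]
        exact half_add h2 x t
    have hfv : f v ∈ (ψ (invol p)).dualAnnihilator.prod (ψ p) := by
      rw [hfapp v, Submodule.mem_prod]
      exact ⟨hBmap ▸ Submodule.mem_map_of_mem hvmem, hvmem⟩
    have hfw : f' w ∈ (ψ (invol p)).dualAnnihilator.prod (ψ p) := by
      rw [hf'app w, Submodule.mem_prod]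
      exact ⟨Submodule.neg_mem _ (hBmap ▸ Submodule.mem_map_of_mem hwmem), hwmem⟩
    rw [hsum]
    exact Submodule.add_mem_sup
      (Submodule.mem_inf.mpr ⟨hfv, LinearMap.mem_range_self f v⟩)
      (Submodule.mem_inf.mpr ⟨hfw, LinearMap.mem_range_self f' w⟩)

end SymplAux

open SymplAux in
/-- Let `ψ` be an indecomposable linear representation of a poset with
order-reversing involution `(P, ⊥)` in a finite-dimensional space `V` over a field of
characteristic `≠ 2`.  The symplectification `ψ⁻ : p ↦ (ψ(p^⊥))° × ψ(p)` in
`(V* × V, Ω)` is symplectically decomposable if and only if `ψ` admits a compatible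
symplectic form. -/
theorem symplectification_decomposable_iff_compatible_symplectic_form
    {k V P : Type*} [Field k] [AddCommGroup V] [Module k V] [FiniteDimensional k V]
    [PartialOrder P] (h2 : (2 : k) ≠ 0) [Nontrivial V]
    (invol : P → P) (hinv : Function.Involutive invol) (hanti : Antitone invol)
    (ψ : P → Submodule k V) (hmono : Monotone ψ)
    (hindec : ∀ U' U'' : Submodule k V, IsCompl U' U'' →
      (∀ p, ψ p = (ψ p ⊓ U') ⊔ (ψ p ⊓ U'')) → U' = ⊥ ∨ U'' = ⊥) :
    (∃ W W' : Submodule k (Module.Dual k V × V), W ≠ ⊥ ∧ W' ≠ ⊥ ∧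
        W' = LinearMap.BilinForm.orthogonal (OmegaForm k V).flip W ∧ IsCompl W W' ∧
        ∀ p, ((ψ (invol p)).dualAnnihilator.prod (ψ p)) =
          (((ψ (invol p)).dualAnnihilator.prod (ψ p)) ⊓ W) ⊔
          (((ψ (invol p)).dualAnnihilator.prod (ψ p)) ⊓ W'))
    ↔ (∃ B : LinearMap.BilinForm k V, LinearMap.BilinForm.Nondegenerate B ∧
        LinearMap.IsAlt B ∧
        ∀ p, ∀ v : V, v ∈ ψ (invol p) ↔ ∀ w ∈ ψ p, B v w = 0) := by
  constructor
  · rintro ⟨W, W', hW, hW', horth, hcompl, hdec⟩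
    set e : (Module.Dual k V × V) →ₗ[k] (Module.Dual k V × V) :=
      (Submodule.subtype W) ∘ₗ (Submodule.linearProjOfIsCompl W W' hcompl) with he_def
    have he_mem : ∀ z, e z ∈ W := fun z => (Submodule.linearProjOfIsCompl W W' hcompl z).2
    have he_left : ∀ w ∈ W, e w = w := by
      intro w hw
      have h := Submodule.linearProjOfIsCompl_apply_left hcompl ⟨w, hw⟩
      have := congrArg (Subtype.val) h
      exact this
    have he_right : ∀ w ∈ W', e w = 0 := by
      intro w hw
      have h := Submodule.projectionOnto_apply_of_mem_right hcompl hw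
      have := congrArg (Subtype.val) h
      exact this
    have hsub : ∀ z, z - e z ∈ W' := by
      intro z
      have h := Submodule.projection_add_projection_eq_self hcompl z
      have h3 : (W'.linearProjOfIsCompl W hcompl.symm z : Module.Dual k V × V) = z - e z :=
        eq_sub_of_add_eq' h
      exact h3 ▸ (W'.linearProjOfIsCompl W hcompl.symm z).2
    have hee : ∀ z, e (e z) = e z := fun z => he_left _ (he_mem z)
    have horthW : ∀ w' ∈ W', ∀ w ∈ W, OmegaForm k V w' w = 0 := by
      intro w' hw' w hw
      rw [horth] at hw'
      exact (LinearMap.BilinForm.mem_orthogonal_iff.mp hw') w hw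
    have horthW2 : ∀ w ∈ W, ∀ w' ∈ W', OmegaForm k V w w' = 0 := by
      intro w hw w' hw'
      rw [omega_skew, horthW w' hw' w hw, neg_zero]
    have hsa : ∀ z u, OmegaForm k V (e z) u = OmegaForm k V z (e u) := by
      intro z u
      have h1 : OmegaForm k V (e z) u = OmegaForm k V (e z) (e u) := by
        conv_lhs => rw [show u = e u + (u - e u) from by abel]
        rw [map_add, horthW2 _ (he_mem z) _ (hsub u), add_zero]
      have h2' : OmegaForm k V z (e u) = OmegaForm k V (e z) (e u) := by
        conv_lhs => rw [show z = e z + (z - e z) from by abel]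
        rw [map_add, LinearMap.add_apply, horthW _ (hsub z) _ (he_mem u), add_zero]
      rw [h1, h2']
    have hpres : ∀ p z, z ∈ (ψ (invol p)).dualAnnihilator.prod (ψ p) →
        e z ∈ (ψ (invol p)).dualAnnihilator.prod (ψ p) := by
      intro p z hz
      rw [hdec p] at hz
      obtain ⟨z₁, hz₁, z₂, hz₂, rfl⟩ := Submodule.mem_sup.mp hz
      rw [map_add, he_left z₁ (Submodule.mem_inf.mp hz₁).2, he_right z₂ (Submodule.mem_inf.mp hz₂).2,
        add_zero]
      exact (Submodule.mem_inf.mp hz₁).1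
    have haOf : ∀ p x, x ∈ ψ p → aOf k e x ∈ ψ p := by
      intro p x hx
      have h0 := hpres p (0, x) (Submodule.mem_prod.mpr ⟨Submodule.zero_mem _, hx⟩)
      exact (Submodule.mem_prod.mp h0).2
    rcases dichotomy ψ hindec (aOf k e) haOf with hab | haN
    · rcases dichotomy ψ hindec (LinearMap.id - aOf k e)
        (fun p x hx => by
          have : (LinearMap.id - aOf k e : V →ₗ[k] V) x = x - aOf k e x := rfl
          rw [this]
          exact Submodule.sub_mem _ hx (haOf p x hx)) with hab' | haN'
      · exact construction h2 invol ψ e hee hsa hpres hab hab'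
      · exfalso
        have hid := proj_eq_id e hee hsa hab haN'
        apply hW'
        rw [Submodule.eq_bot_iff]
        intro w' hw'
        rw [← hid w']
        exact he_right w' hw'
    · exfalso
      set e' : (Module.Dual k V × V) →ₗ[k] (Module.Dual k V × V) := LinearMap.id - e with he'_def
      have he'app : ∀ z, e' z = z - e z := fun z => rfl
      have hee' : ∀ z, e' (e' z) = e' z := by
        intro z
        simp only [he'app, map_sub, hee]
        abel
      have hsa' : ∀ z u, OmegaForm k V (e' z) u = OmegaForm k V z (e' u) := by
        intro z u
        simp only [he'app, map_sub, LinearMap.sub_apply]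
        linear_combination -hsa z u
      have hbij' : Function.Bijective (aOf k e') := by
        rw [aOf_id_sub]
        have hunit : IsUnit ((1 : Module.End k V) - aOf k e) :=
          IsNilpotent.isUnit_one_sub haN
        have hb := (Module.End.isUnit_iff _).mp hunit
        exact hb
      have hN' : IsNilpotent (LinearMap.id - aOf k e') := by
        rw [aOf_id_sub]
        have hrw : (LinearMap.id - (LinearMap.id - aOf k e) : V →ₗ[k] V) = aOf k e := by
          ext v; simp
        rw [hrw]
        exact haN
      have hid := proj_eq_id e' hee' hsa' hbij' hN'
      apply hW
      rw [Submodule.eq_bot_iff]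
      intro w hw
      have h1 := hid w
      rw [he'app] at h1
      -- h1 : w - e w = w, so e w = 0, but e w = w
      have h2' : e w = 0 := by
        have := sub_eq_self.mp h1
        exact this
      rw [← he_left w hw, h2']
  · rintro ⟨B, hBnd, hBalt, hBcompat⟩
    exact reverse h2 invol ψ B hBnd hBalt hBcompat
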